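/- Let D ⊆ ℂ be open and connected, let y₁, y₂ be holomorphic on D with y₂ nonvanishing on D, and suppose the Wronskian W := y₁'y₂ − y₁y₂' is a nonzero constant on D. Set f := y₁/y₂ and let u : D → ℝ be defined by u(z) = log( 8|f'(z)|² / (1 + |f(z)|²)² ). Then for every z ∈ D one has |y₁(z)|² + |y₂(z)|² = 2√2·|W|·e^{−u(z)/2}. Consequently, if u is invariant under translations by 1 and τ (wherever defined), then so is |y₁|² + |y₂|², i.e. the monodromy with respect to (y₁, y₂) is unitary. -/

import Mathlib

open Complex

/-- **Unitarity identity for developing maps.** If `y₁, y₂` are holomorphic on an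
open connected set `D`, `y₂` nonvanishing, with constant nonzero Wronskian `W`,
`f = y₁/y₂`, and `u = log(8|f'|²/(1+|f|²)²)`, then
`|y₁|² + |y₂|² = 2√2 |W| e^{-u/2}` on `D`; consequently any translation
invariance of `u` transfers to `|y₁|² + |y₂|²`. -/
theorem developing_map_unitary
    (D : Set ℂ) (hD : IsOpen D) (hDc : IsConnected D)
    (y₁ y₂ : ℂ → ℂ) (hy₁ : DifferentiableOn ℂ y₁ D) (hy₂ : DifferentiableOn ℂ y₂ D)
    (hy₂0 : ∀ z ∈ D, y₂ z ≠ 0)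
    (W : ℂ) (hW : W ≠ 0)
    (hWron : ∀ z ∈ D, deriv y₁ z * y₂ z - y₁ z * deriv y₂ z = W)
    (f : ℂ → ℂ) (hf : f = fun z => y₁ z / y₂ z)
    (u : ℂ → ℝ)
    (hu : ∀ z ∈ D, u z =
      Real.log (8 * ‖deriv f z‖ ^ 2 / (1 + ‖f z‖ ^ 2) ^ 2)) :
    (∀ z ∈ D,
      ‖y₁ z‖ ^ 2 + ‖y₂ z‖ ^ 2 =
        2 * Real.sqrt 2 * ‖W‖ * Real.exp (-(u z) / 2)) ∧
    (∀ c : ℂ, ∀ z ∈ D, z + c ∈ D → u (z + c) = u z →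
      ‖y₁ (z + c)‖ ^ 2 + ‖y₂ (z + c)‖ ^ 2 =
        ‖y₁ z‖ ^ 2 + ‖y₂ z‖ ^ 2) := by
  have s8 : Real.sqrt 8 = 2 * Real.sqrt 2 := by
    rw [show (8:ℝ) = 2^2*2 by norm_num, Real.sqrt_mul (by positivity), Real.sqrt_sq (by norm_num)]
  have key : ∀ z ∈ D,
      ‖y₁ z‖ ^ 2 + ‖y₂ z‖ ^ 2 =
        2 * Real.sqrt 2 * ‖W‖ * Real.exp (-(u z) / 2) := by
    intro z hz
    have hb : y₂ z ≠ 0 := hy₂0 z hz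
    have hd1 : DifferentiableAt ℂ y₁ z := (hy₁ z hz).differentiableAt (hD.mem_nhds hz)
    have hd2 : DifferentiableAt ℂ y₂ z := (hy₂ z hz).differentiableAt (hD.mem_nhds hz)
    have hdf : deriv f z = W / (y₂ z) ^ 2 := by
      rw [hf, deriv_fun_div hd1 hd2 hb, hWron z hz]
    set a := ‖y₁ z‖ with ha
    set b := ‖y₂ z‖ with hbdef
    have hb0 : 0 < b := by simpa [hbdef] using (norm_pos_iff.mpr hb)
    have hW0 : 0 < ‖W‖ := norm_pos_iff.mpr hW
    have habs_f : ‖f z‖ = a / b := by rw [hf]; simp [map_div₀, ha, hbdef]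
    have habs_df : ‖deriv f z‖ = ‖W‖ / b ^ 2 := by
      rw [hdf]; simp [map_div₀, map_pow, hbdef]
    set t := a ^ 2 + b ^ 2 with ht
    have ht0 : 0 < t := by positivity
    have harg : 8 * ‖deriv f z‖ ^ 2 / (1 + ‖f z‖ ^ 2) ^ 2
        = 8 * ‖W‖ ^ 2 / t ^ 2 := by
      rw [habs_f, habs_df, ht]
      field_simp
      ring
    have hu' : u z = Real.log (8 * ‖W‖ ^ 2 / t ^ 2) := by
      rw [hu z hz, harg]
    have hp : (0:ℝ) < 8 * ‖W‖ ^ 2 / t ^ 2 := by positivity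
    have hsqrt : Real.sqrt (8 * ‖W‖ ^ 2 / t ^ 2)
        = 2 * Real.sqrt 2 * ‖W‖ / t := by
      rw [Real.sqrt_div' _ (by positivity), Real.sqrt_mul (by norm_num),
        Real.sqrt_sq hW0.le, Real.sqrt_sq ht0.le, s8]
    have hexp : Real.exp (-(u z) / 2) = t / (2 * Real.sqrt 2 * ‖W‖) := by
      have h1 : Real.sqrt (8 * ‖W‖ ^ 2 / t ^ 2)
          = Real.exp (Real.log (8 * ‖W‖ ^ 2 / t ^ 2) / 2) := by
        rw [Real.sqrt_eq_rpow, Real.rpow_def_of_pos hp]; ring_nf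
      rw [hu', show -(Real.log (8 * ‖W‖ ^ 2 / t ^ 2)) / 2
          = -(Real.log (8 * ‖W‖ ^ 2 / t ^ 2) / 2) by ring,
        Real.exp_neg, ← h1, hsqrt]
      exact inv_div _ _
    rw [hexp]
    have h2 : 0 < 2 * Real.sqrt 2 * ‖W‖ := by positivity
    field_simp
  refine ⟨key, fun c z hz hz' he => ?_⟩
  rw [key _ hz', key _ hz, he]
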